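/- Let k be a field and n ≥ 1 an integer, and let g_n(t) = 2n·d(t) where d(t) is the distance from t to {k/n : k ∈ ℤ}. Then the persistence module M_{g_n} : P ⥤ ModuleCat k is indecomposable (whenever M_{g_n} ≅ A ⊞ B, one of A, B is pointwise zero), and for every c with 0 ≤ c < 1 the k-module M_{g_n}(0,1,c) has dimension n+1. Hence there exist indecomposable persistence modules arising from one-parameter families of functions whose pointwise dimension is arbitrarily large. -/

import Mathlib

open CategoryTheory

noncomputable section

/-- The map induced on connected components by an inclusion of subspaces. -/
def compMap {Y : Type} [TopologicalSpace Y] {A B : Set Y} (h : A ⊆ B) :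
    ConnectedComponents A → ConnectedComponents B :=
  (continuous_inclusion h).connectedComponentsMap

lemma compMap_id {Y : Type} [TopologicalSpace Y] {A : Set Y} (h : A ⊆ A) :
    compMap h = id := by
  funext x
  obtain ⟨y, rfl⟩ := ConnectedComponents.surjective_coe x
  rfl

lemma compMap_comp {Y : Type} [TopologicalSpace Y] {A B C : Set Y}
    (hAB : A ⊆ B) (hBC : B ⊆ C) (hAC : A ⊆ C) :
    compMap hAC = compMap hBC ∘ compMap hAB := by
  funext x
  obtain ⟨y, rfl⟩ := ConnectedComponents.surjective_coe x
  rfl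

/-- The persistence module (valued in free `k`-modules on connected components)
associated to a monotone family of subspaces indexed by a poset: it assigns to `p`
the free `k`-module on the set of connected components of `A p`, and to each
relation `p ≤ q` the `k`-linear map sending the basis element of a connected
component of `A p` to the basis element of the connected component of `A q`
containing it. -/
def compFunctor (k : Type) [Field k] {α : Type} [Preorder α] {Y : Type} [TopologicalSpace Y]
    (A : α → Set Y) (mono : Monotone A) : α ⥤ ModuleCat k where
  obj p := ModuleCat.of k (ConnectedComponents (A p) →₀ k)
  map {p q} h := ModuleCat.ofHom (Finsupp.lmapDomain k k (compMap (mono (leOfHom h))))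
  map_id p := by
    apply ModuleCat.hom_ext
    show Finsupp.lmapDomain k k _ = _
    rw [compMap_id]; exact Finsupp.lmapDomain_id _ _
  map_comp {p q r} f g := by
    apply ModuleCat.hom_ext
    show Finsupp.lmapDomain k k _ = _
    rw [compMap_comp (mono (leOfHom f)) (mono (leOfHom g))]
    exact Finsupp.lmapDomain_comp _ _ _ _

/-- The sublevel set `S(a,b,c) = {t ∈ ℝ : a ≤ t ≤ b and g t ≤ c}`. -/
def Slev (g : ℝ → ℝ) (a b c : ℝ) : Set ℝ := {t : ℝ | a ≤ t ∧ t ≤ b ∧ g t ≤ c}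

/-- The indexing poset `P = {(a,b,c) ∈ ℝ³ : 0 ≤ a ≤ b ≤ 1}` with
`(a,b,c) ⊑ (a',b',c')` iff `a' ≤ a`, `b ≤ b'` and `c ≤ c'`. -/
def PP : Type := {p : ℝ × ℝ × ℝ // 0 ≤ p.1 ∧ p.1 ≤ p.2.1 ∧ p.2.1 ≤ 1}

namespace PP

instance : PartialOrder PP where
  le p q := q.1.1 ≤ p.1.1 ∧ p.1.2.1 ≤ q.1.2.1 ∧ p.1.2.2 ≤ q.1.2.2
  le_refl p := ⟨le_refl _, le_refl _, le_refl _⟩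
  le_trans p q r h h' := ⟨h'.1.trans h.1, h.2.1.trans h'.2.1, h.2.2.trans h'.2.2⟩
  le_antisymm p q h h' :=
    Subtype.ext (Prod.ext (le_antisymm h'.1 h.1)
      (Prod.ext (le_antisymm h.2.1 h'.2.1) (le_antisymm h.2.2 h'.2.2)))

/-- The coordinate `a` of a point of `P`. -/
def a (p : PP) : ℝ := p.1.1
/-- The coordinate `b` of a point of `P`. -/
def b (p : PP) : ℝ := p.1.2.1
/-- The coordinate `c` of a point of `P`. -/
def c (p : PP) : ℝ := p.1.2.2

lemma le_def {p q : PP} : p ≤ q ↔ q.a ≤ p.a ∧ p.b ≤ q.b ∧ p.c ≤ q.c := Iff.rfl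

end PP

lemma Slev_mono (g : ℝ → ℝ) : Monotone (fun p : PP => Slev g p.a p.b p.c) :=
  fun _ _ h _ ht => ⟨h.1.trans ht.1, ht.2.1.trans h.2.1, ht.2.2.trans h.2.2⟩

/-- The persistence module `M_g : P ⥤ ModuleCat k` of a function `g : ℝ → ℝ`:
it assigns to `(a,b,c) ∈ P` the free `k`-module on the set of connected components of
the sublevel set `S(a,b,c)`, and to each relation `(a,b,c) ⊑ (a',b',c')` the `k`-linear
map sending the basis element corresponding to a component `C` of `S(a,b,c)` to the basis
element corresponding to the unique component of `S(a',b',c')` containing `C`. -/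
def Mg (k : Type) [Field k] (g : ℝ → ℝ) : PP ⥤ ModuleCat k :=
  compFunctor k (fun p : PP => Slev g p.a p.b p.c) (Slev_mono g)

/-- `g_n(t) = 2n·d(t)` where `d(t)` is the distance from `t` to the set
`{k/n : k ∈ ℤ}`.  On `[0,1]` this is the piecewise linear function with
`g_n(i/n) = 0` for `0 ≤ i ≤ n` and `g_n((2i−1)/(2n)) = 1` for `1 ≤ i ≤ n`. -/
noncomputable def gfun (n : ℕ) (t : ℝ) : ℝ := 2 * n * Metric.infDist t {x : ℝ | ∃ k : ℤ, x = k / n}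


open Metric

lemma abs_sub_round_le (x : ℝ) (k : ℤ) : |x - round x| ≤ |x - k| := by
  rcases eq_or_ne k (round x) with rfl | h
  · exact le_rfl
  · have h1 : (1:ℝ) ≤ |(round x : ℝ) - k| := by
      exact_mod_cast Int.one_le_abs (sub_ne_zero.mpr (Ne.symm h))
    have h2 : |(round x : ℝ) - k| ≤ |x - round x| + |x - k| := by
      calc |(round x : ℝ) - k| = |(round x - x) + (x - k)| := by ring_nf
        _ ≤ |(round x : ℝ) - x| + |x - k| := abs_add_le _ _
        _ = |x - round x| + |x - k| := by rw [abs_sub_comm]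
    have h3 : |x - round x| ≤ 1/2 := abs_sub_round x
    linarith

lemma round_eq_of (x : ℝ) (k : ℤ) (h : |x - k| < 1/2) : round x = k := by
  by_contra hne
  have h1 : (1:ℝ) ≤ |(round x : ℝ) - k| := by
    exact_mod_cast Int.one_le_abs (sub_ne_zero.mpr hne)
  have h2 : |(round x : ℝ) - k| ≤ |x - round x| + |x - k| := by
    calc |(round x : ℝ) - k| = |(round x - x) + (x - k)| := by ring_nf
      _ ≤ |(round x : ℝ) - x| + |x - k| := abs_add_le _ _
      _ = |x - round x| + |x - k| := by rw [abs_sub_comm]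
  have h3 : |x - round x| ≤ |x - k| := abs_sub_round_le x k
  linarith


lemma infDist_lat (n : ℕ) (hn : 1 ≤ n) (t : ℝ) :
    Metric.infDist t {x : ℝ | ∃ k : ℤ, x = k / n} = |n * t - round (n * t)| / n := by
  have hn0 : (0:ℝ) < n := by exact_mod_cast hn
  have key : ∀ k : ℤ, |t - k / n| = |n * t - k| / n := by
    intro k
    rw [← abs_of_pos hn0, ← abs_div]
    congr 1
    field_simp
    rw [abs_of_pos hn0]
    ring
  apply le_antisymm
  · have hm : (round (n * t) : ℝ) / n ∈ {x : ℝ | ∃ k : ℤ, x = k / n} := ⟨round (n*t), rfl⟩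
    calc Metric.infDist t _ ≤ dist t ((round (n*t) : ℝ)/n) := infDist_le_dist_of_mem hm
      _ = |t - (round (n*t) : ℝ)/n| := Real.dist_eq _ _
      _ = |n * t - round (n*t)| / n := key _
  · by_contra hlt
    push_neg at hlt
    obtain ⟨y, ⟨k, rfl⟩, hy⟩ := (infDist_lt_iff (by exact ⟨(0:ℝ), ⟨(0:ℤ), by simp⟩⟩)).mp hlt
    rw [Real.dist_eq, key] at hy
    have h1 := abs_sub_round_le (n * t) k
    have hlt2 : |n * t - k| / n < |n * t - round (n*t)| / n := hy
    have h2 : |n * t - round (n*t)| / n ≤ |n * t - k| / n :=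
      by gcongr
    linarith


lemma gfun_eq (n : ℕ) (hn : 1 ≤ n) (t : ℝ) :
    gfun n t = 2 * |n * t - round (n * t)| := by
  have hn0 : (0:ℝ) < n := by exact_mod_cast hn
  rw [gfun, infDist_lat n hn]
  field_simp

lemma gfun_nonneg (n : ℕ) (hn : 1 ≤ n) (t : ℝ) : 0 ≤ gfun n t := by
  rw [gfun_eq n hn]; positivity

lemma gfun_le_one (n : ℕ) (hn : 1 ≤ n) (t : ℝ) : gfun n t ≤ 1 := by
  rw [gfun_eq n hn]
  have := abs_sub_round (n * t)
  linarith

-- same connected component if the segment between is contained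
lemma same_cc {A : Set ℝ} {x y : ℝ} (hx : x ∈ A) (hy : y ∈ A) (h : Set.uIcc x y ⊆ A) :
    (ConnectedComponents.mk ⟨x, hx⟩ : _root_.ConnectedComponents A) = ConnectedComponents.mk ⟨y, hy⟩ := by
  set T : Set A := Subtype.val ⁻¹' Set.uIcc x y with hTdef
  have hT : _root_.IsPreconnected T := by
    rw [← Topology.IsInducing.subtypeVal.isPreconnected_image]
    have himg : Subtype.val '' T = Set.uIcc x y := by
      rw [hTdef, Subtype.image_preimage_val]
      exact Set.inter_eq_self_of_subset_right h
    rw [himg]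
    exact isPreconnected_uIcc
  have hx' : (⟨x, hx⟩ : A) ∈ T := Set.left_mem_uIcc
  have hy' : (⟨y, hy⟩ : A) ∈ T := Set.right_mem_uIcc
  exact ConnectedComponents.coe_eq_coe.mpr
    (connectedComponent_eq (hT.subset_connectedComponent hx' hy'))

lemma finsupp_eq_single {k : Type} [Field k] {X : Type} (hsub : ∀ z z' : X, z = z')
    (f : X →₀ k) (y : X) : f = Finsupp.single y (f y) := by
  ext z
  rw [hsub z y, Finsupp.single_eq_same]

lemma mem_uIcc_abs {a b s : ℝ} (h : s ∈ Set.uIcc a b) : |s - b| ≤ |a - b| := by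
  rw [Set.mem_uIcc] at h
  rw [abs_le]
  rcases h with ⟨h1, h2⟩ | ⟨h1, h2⟩ <;>
    constructor <;> [skip; skip; skip; skip] <;>
    cases abs_cases (a - b) <;> linarith


lemma compMap_mk {Y : Type} [TopologicalSpace Y] {A B : Set Y} (h : A ⊆ B) (x : A) :
    compMap h (ConnectedComponents.mk x) = ConnectedComponents.mk (Set.inclusion h x) := rfl

lemma Mg_map_single (k : Type) [Field k] (g : ℝ → ℝ) {p q : PP} (h : p ≤ q)
    (x : Slev g p.a p.b p.c) (v : k) :
    (Mg k g).map (homOfLE h) (Finsupp.single (ConnectedComponents.mk x) v)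
      = Finsupp.single (ConnectedComponents.mk (Set.inclusion (Slev_mono g h) x)) v := by
  show Finsupp.lmapDomain k k _ (Finsupp.single _ v) = _
  rw [Finsupp.lmapDomain_apply, Finsupp.mapDomain_single, compMap_mk]

lemma Mg_idem (k : Type) [Field k] (n : ℕ) (hn : 1 ≤ n)
    (e : Mg k (gfun n) ⟶ Mg k (gfun n)) (he : e ≫ e = e) :
    e = 0 ∨ e = 𝟙 (Mg k (gfun n)) := by
  -- the top point
  set T : PP := ⟨(0, 1, 1), le_refl 0, zero_le_one, le_refl 1⟩ with hTdef
  have hTa : T.a = 0 := rfl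
  have hTb : T.b = 1 := rfl
  have hTc : T.c = 1 := rfl
  -- connected components of the top sublevel set are all equal
  have hTsub : ∀ z z' : _root_.ConnectedComponents (Slev (gfun n) T.a T.b T.c), z = z' := by
    intro z z'
    obtain ⟨x, rfl⟩ := ConnectedComponents.surjective_coe z
    obtain ⟨y, rfl⟩ := ConnectedComponents.surjective_coe z'
    have hseg : Set.uIcc (x : ℝ) (y : ℝ) ⊆ Slev (gfun n) T.a T.b T.c := by
      intro s hs
      rw [Set.mem_uIcc] at hs
      have hx := x.2; have hy := y.2
      refine ⟨?_, ?_, gfun_le_one n hn s⟩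
      · rcases hs with ⟨h1, _⟩ | ⟨h1, _⟩
        · exact le_trans hx.1 h1
        · exact le_trans hy.1 h1
      · rcases hs with ⟨_, h2⟩ | ⟨_, h2⟩
        · exact le_trans h2 hy.2.1
        · exact le_trans h2 hx.2.1
    have := same_cc x.2 y.2 hseg
    simpa using this
  have hmem0 : (0:ℝ) ∈ Slev (gfun n) T.a T.b T.c :=
    ⟨le_refl 0, zero_le_one, gfun_le_one n hn 0⟩
  set x₀ : _root_.ConnectedComponents (Slev (gfun n) T.a T.b T.c) := ConnectedComponents.mk ⟨0, hmem0⟩ with hx₀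
  obtain ⟨μ, hTapp⟩ : ∃ μ : k, e.app T (Finsupp.single x₀ 1) = Finsupp.single x₀ μ :=
    ⟨_, finsupp_eq_single hTsub _ x₀⟩
  -- singleton points of the poset
  have hQmem : ∀ t : ℝ, t ∈ Slev (gfun n) t t ((gfun n) t) := fun t => ⟨le_refl t, le_refl t, le_refl ((gfun n) t)⟩
  have hQsub : ∀ (t : ℝ), ∀ z z' : _root_.ConnectedComponents (Slev (gfun n) t t ((gfun n) t)), z = z' := by
    intro t z z'
    obtain ⟨x, rfl⟩ := ConnectedComponents.surjective_coe z
    obtain ⟨y, rfl⟩ := ConnectedComponents.surjective_coe z'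
    have hx : (x : ℝ) = t := le_antisymm x.2.2.1 x.2.1
    have hy : (y : ℝ) = t := le_antisymm y.2.2.1 y.2.1
    have : x = y := Subtype.ext (hx.trans hy.symm)
    rw [this]
  -- step A : the scalar at each singleton point equals μ
  have stepA : ∀ (t : ℝ) (h0 : 0 ≤ t) (h1 : t ≤ 1),
      e.app (⟨(t, t, (gfun n) t), h0, le_refl t, h1⟩ : PP)
          (Finsupp.single (ConnectedComponents.mk ⟨t, hQmem t⟩) 1)
        = Finsupp.single (ConnectedComponents.mk ⟨t, hQmem t⟩) μ := by
    intro t h0 h1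
    set q : PP := ⟨(t, t, (gfun n) t), h0, le_refl t, h1⟩ with hq
    have hqa : q.a = t := rfl
    set y : _root_.ConnectedComponents (Slev (gfun n) q.a q.b q.c) := ConnectedComponents.mk ⟨t, hQmem t⟩ with hy
    obtain ⟨ν, happ⟩ : ∃ ν : k, e.app q (Finsupp.single y 1) = Finsupp.single y ν :=
      ⟨_, finsupp_eq_single (hQsub t) _ y⟩
    have hle : q ≤ T := ⟨h0, h1, gfun_le_one n hn t⟩
    have hnat := e.naturality (homOfLE hle)
    have hnat' := congrArg (fun φ => φ (Finsupp.single y 1)) hnat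
    erw [CategoryTheory.comp_apply, CategoryTheory.comp_apply] at hnat'
    rw [Mg_map_single k (gfun n) hle, happ, Mg_map_single k (gfun n) hle] at hnat'
    have hcc : ConnectedComponents.mk (Set.inclusion (Slev_mono (gfun n) hle) ⟨t, hQmem t⟩) = x₀ :=
      hTsub _ _
    rw [hcc, hTapp] at hnat'
    have hμν : μ = ν := by
      have := congrArg (fun f : _ →₀ k => f x₀) hnat'
      simpa [Finsupp.single_eq_same] using this
    rw [happ, hμν]
  -- step B : e is multiplication by μ at every point, on basis vectors
  have stepB : ∀ (p : PP) (x : Slev (gfun n) p.a p.b p.c),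
      e.app p (Finsupp.single (ConnectedComponents.mk x) 1)
        = Finsupp.single (ConnectedComponents.mk x) μ := by
    intro p x
    obtain ⟨t, ht⟩ := x
    have h0 : 0 ≤ t := le_trans p.2.1 ht.1
    have h1 : t ≤ 1 := le_trans ht.2.1 p.2.2.2
    set q : PP := ⟨(t, t, (gfun n) t), h0, le_refl t, h1⟩ with hq
    have hle : q ≤ p := ⟨ht.1, ht.2.1, ht.2.2⟩
    have hnat := e.naturality (homOfLE hle)
    have hnat' := congrArg (fun φ => φ (Finsupp.single (ConnectedComponents.mk ⟨t, hQmem t⟩) 1)) hnat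
    erw [CategoryTheory.comp_apply, CategoryTheory.comp_apply] at hnat'
    rw [Mg_map_single k (gfun n) hle, stepA t h0 h1, Mg_map_single k (gfun n) hle] at hnat'
    have hincl : Set.inclusion (Slev_mono (gfun n) hle) (⟨t, hQmem t⟩ : Slev (gfun n) q.a q.b q.c)
        = (⟨t, ht⟩ : Slev (gfun n) p.a p.b p.c) := rfl
    rw [hincl] at hnat'
    exact hnat'
  -- μ is idempotent
  have hμμ : μ * μ = μ := by
    have hcomp := congrArg (fun φ => φ.app T (Finsupp.single x₀ 1)) he
    simp only [NatTrans.comp_app] at hcomp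
    erw [CategoryTheory.comp_apply] at hcomp
    rw [hTapp] at hcomp
    have hsm : (Finsupp.single x₀ μ : _ →₀ k) = μ • Finsupp.single x₀ 1 := by
      rw [Finsupp.smul_single, smul_eq_mul, mul_one]
    erw [hsm, map_smul, hTapp] at hcomp
    erw [Finsupp.smul_single, Finsupp.smul_single, smul_eq_mul, smul_eq_mul, mul_one] at hcomp
    have := congrArg (fun f : _ →₀ k => f x₀) hcomp
    simpa [Finsupp.single_eq_same] using this
  have hμ01 : μ = 0 ∨ μ = 1 := by
    have : μ ^ 2 = μ := by rw [sq]; exact hμμ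
    exact eq_zero_or_one_of_sq_eq_self this
  -- conclude
  have happall : ∀ (p : PP) (f : (Mg k (gfun n)).obj p), e.app p f = μ • f := by
    intro p f
    have hext : (e.app p).hom = μ • (LinearMap.id : (Mg k (gfun n)).obj p →ₗ[k] (Mg k (gfun n)).obj p) := by
      apply Finsupp.lhom_ext
      intro z b
      obtain ⟨x, rfl⟩ := ConnectedComponents.surjective_coe z
      have hb : (Finsupp.single (ConnectedComponents.mk x) b : _ →₀ k)
          = b • Finsupp.single (ConnectedComponents.mk x) 1 := by
        rw [Finsupp.smul_single, smul_eq_mul, mul_one]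
      erw [hb, map_smul]
      erw [stepB p x]
      simp only [LinearMap.smul_apply, LinearMap.id_apply]
      show _ = μ • b • (Finsupp.single (ConnectedComponents.mk x) (1:k) : _ →₀ k)
      erw [smul_smul, Finsupp.smul_single, Finsupp.smul_single, smul_eq_mul, smul_eq_mul,
        mul_one, mul_comm]
    show (e.app p).hom f = _
    rw [hext]; rfl
  rcases hμ01 with rfl | rfl
  · left
    ext p f
    rw [happall p f]
    simp only [zero_smul]
    exact (LinearMap.zero_apply _).symm
  · right
    ext p f
    rw [happall p f]
    simp only [one_smul]
    rfl

/-- **Indecomposable persistence modules with arbitrarily large pointwise dimension**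
(Section `sec:arb-dim`).  For every `n ≥ 1`, the persistence module `M_{g_n}` is
indecomposable, and for every `0 ≤ c < 1` the value `M_{g_n}(0,1,c)` has dimension
`n + 1` over `k`. -/
theorem Mg_gfun_indecomposable_arbitrary_dimension (k : Type) [Field k]
    (n : ℕ) (hn : 1 ≤ n) :
    ((∀ (A B : PP ⥤ ModuleCat k), (Mg k (gfun n) ≅ A ⊞ B) →
      (∀ p : PP, Limits.IsZero (A.obj p)) ∨ (∀ p : PP, Limits.IsZero (B.obj p)))) ∧
    (∀ c : ℝ, 0 ≤ c → c < 1 →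
      Module.finrank k
        ((Mg k (gfun n)).obj ⟨(0, 1, c), le_refl 0, zero_le_one, le_refl 1⟩) = n + 1) := by
  constructor
  · intro A B i
    set e : Mg k (gfun n) ⟶ Mg k (gfun n) :=
      i.hom ≫ Limits.biprod.fst ≫ Limits.biprod.inl ≫ i.inv with he_def
    have he : e ≫ e = e := by
      rw [he_def]
      simp
    rcases Mg_idem k n hn e he with h | h
    · left
      intro p
      have h2 : (Limits.biprod.fst ≫ Limits.biprod.inl : A ⊞ B ⟶ A ⊞ B) = 0 := by
        have h3 : i.inv ≫ e ≫ i.hom = Limits.biprod.fst ≫ Limits.biprod.inl := by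
          rw [he_def]; simp
        rw [← h3, h]
        simp
      have h3 : (𝟙 A : A ⟶ A) = 0 := by
        have : (𝟙 A : A ⟶ A) = Limits.biprod.inl ≫
            ((Limits.biprod.fst ≫ Limits.biprod.inl : A ⊞ B ⟶ A ⊞ B)) ≫ Limits.biprod.fst := by
          simp
        rw [this, h2]
        simp
      rw [Limits.IsZero.iff_id_eq_zero]
      have := congrArg (fun φ : A ⟶ A => φ.app p) h3
      simpa using this
    · right
      intro p
      have h2 : (Limits.biprod.fst ≫ Limits.biprod.inl : A ⊞ B ⟶ A ⊞ B) = 𝟙 (A ⊞ B) := by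
        have h3 : i.inv ≫ e ≫ i.hom = Limits.biprod.fst ≫ Limits.biprod.inl := by
          rw [he_def]; simp
        rw [h] at h3
        rw [← h3]
        simp
      have h3 : (𝟙 B : B ⟶ B) = 0 := by
        have : (𝟙 B : B ⟶ B) = Limits.biprod.inr ≫ 𝟙 (A ⊞ B) ≫ Limits.biprod.snd := by simp
        rw [this, ← h2]
        simp
      rw [Limits.IsZero.iff_id_eq_zero]
      have := congrArg (fun φ : B ⟶ B => φ.app p) h3
      simpa using this
  · intro c hc0 hc1
    have hn0 : (0:ℝ) < n := by exact_mod_cast hn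
    set S : Set ℝ := Slev (gfun n) 0 1 c with hSdef
    have hmem : ∀ t : ℝ, t ∈ S ↔ 0 ≤ t ∧ t ≤ 1 ∧ 2 * |n * t - round (n * t)| ≤ c := by
      intro t
      rw [hSdef]
      unfold Slev
      rw [Set.mem_setOf_eq, gfun_eq n hn]
    have hround : ∀ t : ℝ, 0 ≤ t → t ≤ 1 → 0 ≤ round ((n:ℝ)*t) ∧ round ((n:ℝ)*t) ≤ (n:ℤ) := by
      intro t h0 h1
      rw [round_eq]
      constructor
      · rw [Int.le_floor]
        push_cast
        nlinarith
      · have h3 : ⌊(n:ℝ)*t + 1/2⌋ < (n:ℤ) + 1 := by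
          rw [Int.floor_lt]
          push_cast
          nlinarith
        omega
    have hcast : ∀ i : ℤ, (n:ℝ) * ((i:ℝ)/n) = (i:ℝ) := by
      intro i; field_simp
    have hlat : ∀ i : ℤ, 0 ≤ i → i ≤ (n:ℤ) → ((i:ℝ)/n) ∈ S := by
      intro i h0 h1
      rw [hmem]
      refine ⟨by positivity, ?_, ?_⟩
      · rw [div_le_one hn0]; exact_mod_cast h1
      · rw [hcast, round_intCast, sub_self, abs_zero, mul_zero]; exact hc0
    -- any point of S is connected to its nearest lattice point
    have hconn : ∀ (x : ℝ) (hx : x ∈ S),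
        (ConnectedComponents.mk ⟨x, hx⟩ : _root_.ConnectedComponents S)
          = ConnectedComponents.mk ⟨((round ((n:ℝ)*x) : ℝ))/n,
              hlat _ ((hround x (((hmem x).mp hx).1) (((hmem x).mp hx).2.1)).1)
                ((hround x (((hmem x).mp hx).1) (((hmem x).mp hx).2.1)).2)⟩ := by
      intro x hx
      obtain ⟨hx0, hx1, hxg⟩ := (hmem x).mp hx
      set i : ℤ := round ((n:ℝ)*x) with hi
      obtain ⟨hi0, hin⟩ := hround x hx0 hx1
      have hIn0 : (0:ℝ) ≤ (i:ℝ)/n := by positivity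
      have hIn1 : (i:ℝ)/n ≤ 1 := by
        rw [div_le_one hn0]; exact_mod_cast hin
      apply same_cc
      intro s hs
      have hmemu : (n:ℝ)*s ∈ Set.uIcc ((n:ℝ)*x) ((i:ℝ)) := by
        rw [Set.mem_uIcc] at hs ⊢
        rcases hs with ⟨h1, h2⟩ | ⟨h1, h2⟩
        · left
          constructor
          · nlinarith
          · nlinarith [hcast i]
        · right
          constructor
          · nlinarith [hcast i]
          · nlinarith
      have habs : |(n:ℝ)*s - i| ≤ |(n:ℝ)*x - i| := mem_uIcc_abs hmemu
      rw [hmem]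
      refine ⟨?_, ?_, ?_⟩
      · rw [Set.mem_uIcc] at hs
        rcases hs with ⟨h1, _⟩ | ⟨h1, _⟩ <;> linarith
      · rw [Set.mem_uIcc] at hs
        rcases hs with ⟨_, h2⟩ | ⟨_, h2⟩ <;> linarith
      · have h1 : |(n:ℝ)*s - round ((n:ℝ)*s)| ≤ |(n:ℝ)*s - i| := abs_sub_round_le _ _
        linarith
    -- the labelling by nearest lattice point is constant on connected components
    have hsound : ∀ a b : S, connectedComponent a = connectedComponent b →
        round ((n:ℝ)*(a:ℝ)) = round ((n:ℝ)*(b:ℝ)) := by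
      intro a b hab
      set i : ℤ := round ((n:ℝ)*(a:ℝ)) with hi
      have hcont : Continuous fun t : ℝ => |(n:ℝ)*t - (i:ℝ)| :=
        ((continuous_const.mul continuous_id).sub continuous_const).abs
      set V : Set S := Subtype.val ⁻¹' {t : ℝ | |(n:ℝ)*t - i| ≤ c/2} with hV
      have hhalf : c/2 < 1/2 := by linarith
      have hVclosed : IsClosed V :=
        (isClosed_le hcont continuous_const).preimage continuous_subtype_val
      have hVopen : IsOpen V := by
        have hVeq : V = Subtype.val ⁻¹' {t : ℝ | |(n:ℝ)*t - i| < 1/2} := by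
          ext z
          simp only [hV, Set.mem_preimage, Set.mem_setOf_eq]
          constructor
          · intro h; linarith
          · intro h
            have hrz : round ((n:ℝ)*(z:ℝ)) = i := round_eq_of _ _ h
            have := ((hmem (z:ℝ)).mp z.2).2.2
            rw [hrz] at this
            linarith
        rw [hVeq]
        exact (isOpen_lt hcont continuous_const).preimage continuous_subtype_val
      have haV : a ∈ V := by
        simp only [hV, Set.mem_preimage, Set.mem_setOf_eq]
        have := ((hmem (a:ℝ)).mp a.2).2.2
        rw [← hi] at this
        linarith
      have hbV : b ∈ V := by
        have hsub := IsClopen.connectedComponent_subset ⟨hVclosed, hVopen⟩ haV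
        rw [hab] at hsub
        exact hsub mem_connectedComponent
      simp only [hV, Set.mem_preimage, Set.mem_setOf_eq] at hbV
      exact (round_eq_of _ _ (lt_of_le_of_lt hbV hhalf)).symm ▸ rfl
    -- the bijection with Fin (n+1)
    have hbound : ∀ x : S, (round ((n:ℝ)*(x:ℝ))).toNat < n + 1 := by
      intro x
      obtain ⟨h0, h1, _⟩ := (hmem (x:ℝ)).mp x.2
      have := (hround (x:ℝ) h0 h1).2
      omega
    let F : _root_.ConnectedComponents S → Fin (n+1) :=
      Quotient.lift (fun x : S => (⟨(round ((n:ℝ)*(x:ℝ))).toNat, hbound x⟩ : Fin (n+1)))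
        (fun a b h => by
          ext
          simp only
          rw [hsound a b h])
    have hFmk : ∀ x : S, F (ConnectedComponents.mk x)
        = ⟨(round ((n:ℝ)*(x:ℝ))).toNat, hbound x⟩ := fun x => rfl
    have hFinj : Function.Injective F := by
      intro z z' hzz
      obtain ⟨x, rfl⟩ := ConnectedComponents.surjective_coe z
      obtain ⟨y, rfl⟩ := ConnectedComponents.surjective_coe z'
      have hxy : round ((n:ℝ)*(x:ℝ)) = round ((n:ℝ)*(y:ℝ)) := by
        have h1 := congrArg Fin.val hzz
        rw [hFmk, hFmk] at h1
        simp only at h1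
        have hx0 := ((hmem (x:ℝ)).mp x.2)
        have hy0 := ((hmem (y:ℝ)).mp y.2)
        have hx' := (hround (x:ℝ) hx0.1 hx0.2.1).1
        have hy' := (hround (y:ℝ) hy0.1 hy0.2.1).1
        omega
      have hcx := hconn (x:ℝ) x.2
      have hcy := hconn (y:ℝ) y.2
      have hx' : (ConnectedComponents.mk x : _root_.ConnectedComponents S)
          = ConnectedComponents.mk ⟨(x:ℝ), x.2⟩ := rfl
      have hy' : (ConnectedComponents.mk y : _root_.ConnectedComponents S)
          = ConnectedComponents.mk ⟨(y:ℝ), y.2⟩ := rfl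
      rw [hx', hy', hcx, hcy]
      congr 1
      apply Subtype.ext
      simp only
      rw [hxy]
    have hFsurj : Function.Surjective F := by
      intro j
      have hj0 : (0:ℤ) ≤ ((j:ℕ):ℤ) := Int.ofNat_nonneg _
      have hjn : ((j:ℕ):ℤ) ≤ (n:ℤ) := by
        have := j.2
        omega
      refine ⟨ConnectedComponents.mk ⟨(((j:ℕ):ℤ):ℝ)/n, hlat _ hj0 hjn⟩, ?_⟩
      rw [hFmk]
      ext
      simp only
      rw [hcast, round_intCast]
      simp
    let E : _root_.ConnectedComponents S ≃ Fin (n+1) := Equiv.ofBijective F ⟨hFinj, hFsurj⟩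
    show Module.finrank k (_root_.ConnectedComponents (Slev (gfun n) 0 1 c) →₀ k) = n + 1
    rw [LinearEquiv.finrank_eq
      ((Finsupp.domLCongr E : (_ →₀ k) ≃ₗ[k] (Fin (n+1) →₀ k)))]
    rw [Module.finrank_finsupp_self, Fintype.card_fin]

end
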